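/- Let Ω be a bounded domain in ℝ^n, w ∈ C²(Ω) ∩ C(Ω̄), x₀ ∈ Ω, and ε ∈ (0, min_{∂Ω} w - w(x₀)]. Set d = max_{x ∈ ∂Ω}|x - x₀|, let ω_n be the volume of the unit ball, and let P = {x ∈ Ω : |Dw(x)| < ε/d and w(y) ≥ w(x) + Dw(x)·(y-x) for all y ∈ Ω} (the set of points where w has a small-slope global supporting hyperplane). Then (ω_n/d^n) ε^n ≤ ∫_P det(D²w(x)) dx. -/

import Mathlib

open MeasureTheory InnerProductSpace Set Filter Metric
open scoped RealInnerProductSpace Topology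

/-- 1-D second order condition at an interior minimum. -/
lemma psd_aux {g g' : ℝ → ℝ} {c : ℝ} (hg0 : g 0 = 0)
    (hgnn : ∀ᶠ t in 𝓝 (0:ℝ), 0 ≤ g t)
    (hder : ∀ᶠ t in 𝓝 (0:ℝ), HasDerivAt g (g' t) t)
    (hg'0 : g' 0 = 0) (hder2 : HasDerivAt g' c 0) : 0 ≤ c := by
  by_contra hc
  push_neg at hc
  have hslope : Tendsto (slope g' 0) (𝓝[≠] (0:ℝ)) (𝓝 c) :=
    hasDerivAt_iff_tendsto_slope.1 hder2
  have hev : ∀ᶠ t in 𝓝[≠] (0:ℝ), slope g' 0 t < c / 2 :=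
    hslope.eventually_lt_const (by linarith)
  have hev' : ∀ᶠ t in 𝓝 (0:ℝ), t ≠ (0:ℝ) → slope g' 0 t < c / 2 :=
    eventually_nhdsWithin_iff.1 hev
  obtain ⟨δ, hδpos, hδ⟩ := Metric.eventually_nhds_iff.1 ((hgnn.and hder).and hev')
  set t₀ := δ / 2 with ht₀
  have ht₀pos : 0 < t₀ := by positivity
  have hmem : ∀ t ∈ Icc (0:ℝ) t₀, dist t 0 < δ := by
    intro t ht
    rw [Real.dist_eq, sub_zero, abs_of_nonneg ht.1]
    calc t ≤ t₀ := ht.2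
    _ < δ := by simp [ht₀]; linarith
  have hanti : StrictAntiOn g (Icc 0 t₀) := by
    apply strictAntiOn_of_deriv_neg (convex_Icc _ _)
    · intro t ht
      exact ((hδ (hmem t ht)).1.2).continuousAt.continuousWithinAt
    · intro t ht
      rw [interior_Icc] at ht
      have h1 := hδ (hmem t ⟨le_of_lt ht.1, le_of_lt ht.2⟩)
      have hne : t ≠ 0 := ne_of_gt ht.1
      have hsl := h1.2 hne
      rw [slope_def_field, hg'0, sub_zero, sub_zero] at hsl
      have : g' t < c / 2 * t := by
        rw [div_lt_iff₀ ht.1] at hsl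
        linarith [hsl]
      have : g' t < 0 := lt_of_lt_of_le this (by nlinarith [ht.1])
      rw [h1.1.2.deriv]
      exact this
  have h1 := hanti (left_mem_Icc.2 (le_of_lt ht₀pos)) (right_mem_Icc.2 (le_of_lt ht₀pos)) ht₀pos
  have h2 := (hδ (hmem t₀ (right_mem_Icc.2 (le_of_lt ht₀pos)))).1.1
  rw [hg0] at h1
  linarith


noncomputable def dualIso (F : Type*) [NormedAddCommGroup F] [InnerProductSpace ℝ F]
    [CompleteSpace F] : (StrongDual ℝ F) ≃ₗᵢ[ℝ] F where
  toFun := (toDual ℝ F).symm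
  invFun := toDual ℝ F
  map_add' := fun φ ψ => by simp
  map_smul' := fun c φ => by
    have h := (toDual ℝ F).symm.map_smulₛₗ c φ
    simpa [starRingEnd_apply] using h
  left_inv := fun φ => by simp
  right_inv := fun x => by simp
  norm_map' := fun φ => by simp

@[simp] lemma inner_dualIso_apply {F : Type*} [NormedAddCommGroup F] [InnerProductSpace ℝ F]
    [CompleteSpace F] (φ : StrongDual ℝ F) (y : F) :
    ⟪dualIso F φ, y⟫ = φ y := toDual_symm_apply

variable {n : ℕ}
local notation "E" => EuclideanSpace ℝ (Fin n)



lemma support_closure {Ω : Set E} {w : E → ℝ} (hwc : ContinuousOn w (closure Ω))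
    (x : E) (φ : E →L[ℝ] ℝ)
    (h : ∀ y ∈ Ω, w x + φ (y - x) ≤ w y) :
    ∀ y ∈ closure Ω, w x + φ (y - x) ≤ w y := by
  intro y hy
  have h1 : ContinuousWithinAt (fun y => w y - φ (y - x)) (closure Ω) y :=
    (hwc y hy).sub ((φ.continuous.comp (continuous_id.sub continuous_const)).continuousWithinAt)
  have h2 : Tendsto (fun y => w y - φ (y - x)) (𝓝[Ω] y) (𝓝 (w y - φ (y - x))) :=
    h1.mono_left (nhdsWithin_mono _ subset_closure)
  have h3 : ∀ᶠ z in 𝓝[Ω] y, w x ≤ w z - φ (z - x) :=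
    eventually_nhdsWithin_of_forall (fun z hz => by linarith [h z hz])
  have hne : (𝓝[Ω] y).NeBot := mem_closure_iff_nhdsWithin_neBot.1 hy
  linarith [ge_of_tendsto h2 h3]

lemma exists_support {Ω : Set E} (hΩopen : IsOpen Ω) (hΩbd : Bornology.IsBounded Ω)
    {w : E → ℝ} (hw2 : ContDiffOn ℝ 2 w Ω) (hwc : ContinuousOn w (closure Ω))
    {x₀ : E} (hx₀ : x₀ ∈ Ω)
    {ε : ℝ} (hε : 0 < ε) (hεle : ∀ x ∈ frontier Ω, w x₀ + ε ≤ w x)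
    {d : ℝ} (hdpos : 0 < d) (hdub : ∀ z ∈ frontier Ω, ‖z - x₀‖ ≤ d)
    {v : E} (hv : ‖v‖ < ε / d) :
    ∃ x ∈ Ω, fderiv ℝ w x = innerSL ℝ v ∧ ∀ y ∈ Ω, w x + ⟪v, y - x⟫ ≤ w y := by
  set φ : E → ℝ := fun z => w z - ⟪v, z⟫ with hφ
  have hφc : ContinuousOn φ (closure Ω) :=
    hwc.sub ((innerSL ℝ v).continuous.continuousOn)
  have hcpt : IsCompact (closure Ω) :=
    Metric.isCompact_of_isClosed_isBounded isClosed_closure hΩbd.closure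
  obtain ⟨z, hzcl, hzmin⟩ := hcpt.exists_isMinOn ⟨x₀, subset_closure hx₀⟩ hφc
  have hminx₀ : φ z ≤ φ x₀ := hzmin (subset_closure hx₀)
  have hzΩ : z ∈ Ω := by
    by_contra hzF
    have hfr : z ∈ frontier Ω := by
      rw [frontier, hΩopen.interior_eq]
      exact ⟨hzcl, hzF⟩
    have h1 : w x₀ + ε ≤ w z := hεle z hfr
    have h2 : ‖z - x₀‖ ≤ d := hdub z hfr
    have h3 : ⟪v, z - x₀⟫ ≤ ‖v‖ * ‖z - x₀‖ := real_inner_le_norm v _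
    have h4 : ‖v‖ * ‖z - x₀‖ ≤ ‖v‖ * d :=
      mul_le_mul_of_nonneg_left h2 (norm_nonneg v)
    have h5 : ‖v‖ * d < ε := by
      rw [lt_div_iff₀ hdpos] at hv; exact hv
    have h6 : ⟪v, z - x₀⟫ = ⟪v, z⟫ - ⟪v, x₀⟫ := inner_sub_right _ _ _
    simp only [hφ] at hminx₀
    linarith
  have hwd : DifferentiableAt ℝ w z :=
    (hw2.contDiffAt (hΩopen.mem_nhds hzΩ)).differentiableAt (by norm_num)
  have hder : HasFDerivAt φ (fderiv ℝ w z - innerSL ℝ v) z := by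
    exact hwd.hasFDerivAt.sub (innerSL ℝ v).hasFDerivAt
  have hlocmin : IsLocalMin φ z := by
    apply Filter.eventually_of_mem (hΩopen.mem_nhds hzΩ)
    exact fun y hy => hzmin (subset_closure hy)
  have h0 := hlocmin.hasFDerivAt_eq_zero hder
  have hfd : fderiv ℝ w z = innerSL ℝ v := by
    rwa [sub_eq_zero] at h0
  refine ⟨z, hzΩ, hfd, fun y hy => ?_⟩
  have := hzmin (subset_closure hy)
  simp only [hφ] at this
  have h6 : ⟪v, y - z⟫ = ⟪v, y⟫ - ⟪v, z⟫ := inner_sub_right _ _ _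
  simp only [Set.mem_setOf_eq] at this ⊢
  linarith


lemma hessian_psd {Ω : Set E} (hΩopen : IsOpen Ω)
    {w : E → ℝ} (hw2 : ContDiffOn ℝ 2 w Ω) {x : E} (hx : x ∈ Ω)
    (hsupp : ∀ y ∈ Ω, w x + fderiv ℝ w x (y - x) ≤ w y) (u : E) :
    0 ≤ fderiv ℝ (fderiv ℝ w) x u u := by
  set h : ℝ → E := fun t => x + t • u with hh
  have hcw : ContDiffAt ℝ 2 w x := hw2.contDiffAt (hΩopen.mem_nhds hx)
  have hΦ : ContDiffAt ℝ 1 (fderiv ℝ w) x := hcw.fderiv_right (by norm_num)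
  have hΦd : HasFDerivAt (fderiv ℝ w) (fderiv ℝ (fderiv ℝ w) x) x :=
    (hΦ.differentiableAt one_ne_zero).hasFDerivAt
  have hhc : Continuous h := by continuity
  have hh0 : h 0 = x := by simp [hh]
  have hmem : ∀ᶠ t in 𝓝 (0:ℝ), h t ∈ Ω := by
    have : Ω ∈ 𝓝 (h 0) := hΩopen.mem_nhds (by rwa [hh0])
    exact hhc.continuousAt.eventually_mem this
  have hhder : ∀ t : ℝ, HasDerivAt h u t := by
    intro t
    have : HasDerivAt (fun s : ℝ => s • u) ((1:ℝ) • u) t := (hasDerivAt_id t).smul_const u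
    have h' := this.const_add x
    rw [one_smul] at h'
    exact h'
  set g : ℝ → ℝ := fun t => w (h t) - w x - t * (fderiv ℝ w x u) with hg
  set g' : ℝ → ℝ := fun t => fderiv ℝ w (h t) u - fderiv ℝ w x u with hg'
  have hder : ∀ᶠ t in 𝓝 (0:ℝ), HasDerivAt g (g' t) t := by
    filter_upwards [hmem] with t ht
    have hwd : DifferentiableAt ℝ w (h t) :=
      (hw2.contDiffAt (hΩopen.mem_nhds ht)).differentiableAt (by norm_num)
    have h1 : HasDerivAt (fun s => w (h s)) (fderiv ℝ w (h t) u) t :=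
      (hwd.hasFDerivAt.comp_hasDerivAt t (hhder t))
    exact (h1.sub_const (w x)).sub (hasDerivAt_mul_const (fderiv ℝ w x u))
  have hgnn : ∀ᶠ t in 𝓝 (0:ℝ), 0 ≤ g t := by
    filter_upwards [hmem] with t ht
    have := hsupp (h t) ht
    have hsub : h t - x = t • u := by simp [hh]
    rw [hsub, ContinuousLinearMap.map_smul] at this
    simp only [hg, smul_eq_mul] at this ⊢
    linarith
  have hder2 : HasDerivAt g' (fderiv ℝ (fderiv ℝ w) x u u) 0 := by
    have h1 : HasDerivAt (fun t => fderiv ℝ w (h t)) (fderiv ℝ (fderiv ℝ w) x u) 0 := by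
      have hΦd' : HasFDerivAt (fderiv ℝ w) (fderiv ℝ (fderiv ℝ w) x) (h 0) := by rwa [hh0]
      have := hΦd'.comp_hasDerivAt 0 (hhder 0)
      exact this
    have h2 := (ContinuousLinearMap.apply ℝ ℝ u).hasFDerivAt.comp_hasDerivAt 0 h1
    simpa [hg'] using h2.sub_const (fderiv ℝ w x u)
  exact psd_aux (by simp [hg, hh0]) hgnn hder (by simp [hg', hh0]) hder2


lemma det_formula {Ω : Set E} (hΩopen : IsOpen Ω)
    {w : E → ℝ} (hw2 : ContDiffOn ℝ 2 w Ω) {x : E} (hx : x ∈ Ω)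
    (hsupp : ∀ y ∈ Ω, w x + fderiv ℝ w x (y - x) ≤ w y) :
    Matrix.det (Matrix.of fun i j : Fin n =>
            fderiv ℝ (fun z => fderiv ℝ w z (EuclideanSpace.single j 1)) x
              (EuclideanSpace.single i 1))
      = (fderiv ℝ (fun z => dualIso (EuclideanSpace ℝ (Fin n)) (fderiv ℝ w z)) x).det
    ∧ 0 ≤ Matrix.det (Matrix.of fun i j : Fin n =>
            fderiv ℝ (fun z => fderiv ℝ w z (EuclideanSpace.single j 1)) x
              (EuclideanSpace.single i 1)) := by
  classical
  set e : Fin n → E := fun i => EuclideanSpace.single i 1 with he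
  set D2 : E →L[ℝ] (E →L[ℝ] ℝ) := fderiv ℝ (fderiv ℝ w) x with hD2
  set M : Matrix (Fin n) (Fin n) ℝ := Matrix.of (fun i j : Fin n =>
      fderiv ℝ (fun z => fderiv ℝ w z (e j)) x (e i)) with hMdef
  have hcw : ContDiffAt ℝ 2 w x := hw2.contDiffAt (hΩopen.mem_nhds hx)
  have hΦ : ContDiffAt ℝ 1 (fderiv ℝ w) x := hcw.fderiv_right (by norm_num)
  have hΦd : HasFDerivAt (fderiv ℝ w) D2 x :=
    (hΦ.differentiableAt one_ne_zero).hasFDerivAt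
  have hM : ∀ i j, M i j = D2 (e i) (e j) := by
    intro i j
    have h1 : HasFDerivAt (fun z => fderiv ℝ w z (e j))
        ((ContinuousLinearMap.apply ℝ ℝ (e j)).comp D2) x :=
      (ContinuousLinearMap.apply ℝ ℝ (e j)).hasFDerivAt.comp x hΦd
    simp only [hMdef, Matrix.of_apply, h1.fderiv]
    rfl
  set iso := dualIso (EuclideanSpace ℝ (Fin n)) with hiso
  have hA : fderiv ℝ (fun z => iso (fderiv ℝ w z)) x
      = (iso.toContinuousLinearEquiv : (EuclideanSpace ℝ (Fin n) →L[ℝ] ℝ) →L[ℝ] E).comp D2 := by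
    have h := iso.comp_fderiv (f := fderiv ℝ w) (x := x)
    exact h
  -- determinant via matrix in the standard orthonormal basis
  set b := (EuclideanSpace.basisFun (Fin n) ℝ).toBasis with hb
  have hbj' : ∀ i, b i = e i := fun i => by
    simp [hb, OrthonormalBasis.coe_toBasis, EuclideanSpace.basisFun_apply, he]
  have hdet1 : (fderiv ℝ (fun z => iso (fderiv ℝ w z)) x).det
      = (LinearMap.toMatrix b b (fderiv ℝ (fun z => iso (fderiv ℝ w z)) x : E →ₗ[ℝ] E)).det := by
    rw [LinearMap.det_toMatrix]
  have hmat : LinearMap.toMatrix b b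
      ((fderiv ℝ (fun z => iso (fderiv ℝ w z)) x : E →ₗ[ℝ] E)) = M.transpose := by
    ext i j
    rw [LinearMap.toMatrix_apply]
    have hbj : b j = e j := by
      simp [hb, OrthonormalBasis.coe_toBasis, EuclideanSpace.basisFun_apply, he]
    have hrepr : ∀ u : E, b.repr u i = u i := fun u => by
      simp [hb, OrthonormalBasis.coe_toBasis_repr_apply, EuclideanSpace.basisFun_repr]
    rw [hbj, hrepr]
    have happ : (fderiv ℝ (fun z => iso (fderiv ℝ w z)) x) (e j) = iso (D2 (e j)) := by
      rw [hA]; rfl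
    have hcoord : (iso (D2 (e j))) i = D2 (e j) (e i) := by
      have h1 : ⟪iso (D2 (e j)), e i⟫ = D2 (e j) (e i) := inner_dualIso_apply _ _
      rw [← h1, he]
      simp [EuclideanSpace.inner_single_right]
    simp only [ContinuousLinearMap.coe_coe, happ, hcoord, hM, Matrix.transpose_apply,
      Matrix.of_apply]
  have hdeteq : M.det = (fderiv ℝ (fun z => iso (fderiv ℝ w z)) x).det := by
    rw [hdet1, hmat, Matrix.det_transpose]
  refine ⟨hdeteq, ?_⟩
  have hsymm : ∀ i j, M i j = M j i := by
    intro i j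
    rw [hM, hM]
    exact (hcw.isSymmSndFDerivAt (by norm_num)).eq (e i) (e j)
  have hherm : M.IsHermitian := by
    ext i j
    rw [Matrix.conjTranspose_apply, star_trivial]
    exact hsymm j i
  have hquad : ∀ c : Fin n → ℝ, 0 ≤ dotProduct (star c) (M.mulVec c) := by
    intro c
    set u : E := (EuclideanSpace.equiv (Fin n) ℝ).symm c with hudef
    have hui : ∀ i, u i = c i := fun i => rfl
    have hexp : ∑ i, c i • e i = u := by
      have h0 := b.sum_repr u
      have : ∀ i, b.repr u i = c i := fun i => by
        simp [hb, OrthonormalBasis.coe_toBasis_repr_apply, EuclideanSpace.basisFun_repr, hui]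
      rw [Finset.sum_congr rfl (fun i _ => by rw [this i, hbj' i])] at h0
      exact h0
    have h1 : D2 u = ∑ i, c i • D2 (e i) := by
      rw [← hexp, map_sum]
      exact Finset.sum_congr rfl (fun i _ => D2.map_smul _ _)
    have h3 : ∀ i, D2 (e i) u = ∑ j, c j * D2 (e i) (e j) := by
      intro i
      rw [← hexp, map_sum]
      exact Finset.sum_congr rfl (fun j _ => (D2 (e i)).map_smul _ _)
    have h2 : D2 u u = ∑ i, c i * ∑ j, c j * D2 (e i) (e j) := by
      rw [h1]
      rw [ContinuousLinearMap.sum_apply]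
      exact Finset.sum_congr rfl (fun i _ => by
        rw [ContinuousLinearMap.smul_apply, smul_eq_mul, h3 i])
    have hnn : 0 ≤ D2 u u := hessian_psd hΩopen hw2 hx hsupp u
    rw [h2] at hnn
    have hdot : dotProduct (star c) (M.mulVec c)
        = ∑ i, c i * ∑ j, c j * D2 (e i) (e j) := by
      simp only [dotProduct, Matrix.mulVec, Pi.star_apply, star_trivial]
      exact Finset.sum_congr rfl (fun i _ => by
        congr 1
        exact Finset.sum_congr rfl (fun j _ => by rw [hM]; ring))
    rw [hdot]
    exact hnn
  have hps : M.PosSemidef := Matrix.PosSemidef.of_dotProduct_mulVec_nonneg hherm hquad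
  rw [hps.1.det_eq_prod_eigenvalues]
  apply Finset.prod_nonneg
  intro i _
  simpa using hps.eigenvalues_nonneg i



/-- Legendre-type transform of `w` over `closure Ω`. -/
noncomputable def leg (Ω : Set (EuclideanSpace ℝ (Fin n))) (w : EuclideanSpace ℝ (Fin n) → ℝ) :
    EuclideanSpace ℝ (Fin n) → ℝ :=
  fun v => sSup ((fun z => ⟪v, z⟫ - w z) '' closure Ω)

lemma leg_bddAbove {Ω : Set E} (hΩbd : Bornology.IsBounded Ω) {w : E → ℝ}
    (hwc : ContinuousOn w (closure Ω)) (v : E) :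
    BddAbove ((fun z => ⟪v, z⟫ - w z) '' closure Ω) := by
  have hcpt : IsCompact (closure Ω) :=
    Metric.isCompact_of_isClosed_isBounded isClosed_closure hΩbd.closure
  exact hcpt.bddAbove_image (((innerSL ℝ v).continuous.continuousOn).sub hwc)

lemma le_leg {Ω : Set E} (hΩbd : Bornology.IsBounded Ω) {w : E → ℝ}
    (hwc : ContinuousOn w (closure Ω)) {z : E} (hz : z ∈ closure Ω) (v : E) :
    ⟪v, z⟫ - w z ≤ leg Ω w v :=
  le_csSup (leg_bddAbove hΩbd hwc v) (mem_image_of_mem _ hz)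

lemma leg_eq {Ω : Set E} (hΩbd : Bornology.IsBounded Ω) {w : E → ℝ}
    (hwc : ContinuousOn w (closure Ω)) {x v : E} (hx : x ∈ closure Ω)
    (hsupp : ∀ z ∈ closure Ω, w x + ⟪v, z - x⟫ ≤ w z) :
    leg Ω w v = ⟪v, x⟫ - w x := by
  apply IsGreatest.csSup_eq
  constructor
  · exact mem_image_of_mem _ hx
  · rintro a ⟨z, hz, rfl⟩
    have := hsupp z hz
    have h6 : ⟪v, z - x⟫ = ⟪v, z⟫ - ⟪v, x⟫ := inner_sub_right _ _ _
    simp only []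
    linarith

lemma leg_lipschitz {Ω : Set E} (hΩbd : Bornology.IsBounded Ω) (hne : (closure Ω).Nonempty)
    {w : E → ℝ} (hwc : ContinuousOn w (closure Ω)) :
    ∃ K : NNReal, LipschitzWith K (leg Ω w) := by
  obtain ⟨R₀, hR₀⟩ := hΩbd.closure.subset_closedBall 0
  set R := max R₀ 0 with hR
  have hRnn : 0 ≤ R := le_max_right _ _
  have hsub : closure Ω ⊆ closedBall 0 R :=
    hR₀.trans (closedBall_subset_closedBall (le_max_left _ _))
  refine ⟨Real.toNNReal R, LipschitzWith.of_dist_le_mul fun v v' => ?_⟩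
  have key : ∀ a b : E, leg Ω w a - leg Ω w b ≤ R * ‖a - b‖ := by
    intro a b
    have h1 : leg Ω w a ≤ leg Ω w b + R * ‖a - b‖ := by
      apply csSup_le (hne.image _)
      rintro t ⟨z, hz, rfl⟩
      have hzR : ‖z‖ ≤ R := mem_closedBall_zero_iff.1 (hsub hz)
      have h2 : ⟪a - b, z⟫ ≤ ‖a - b‖ * ‖z‖ := real_inner_le_norm _ _
      have h3 : ‖a - b‖ * ‖z‖ ≤ ‖a - b‖ * R :=
        mul_le_mul_of_nonneg_left hzR (norm_nonneg _)
      have h4 : ⟪b, z⟫ - w z ≤ leg Ω w b := le_leg hΩbd hwc hz b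
      have h5 : ⟪a, z⟫ = ⟪b, z⟫ + ⟪a - b, z⟫ := by
        rw [← inner_add_left]
        congr 1
        abel
      simp only []
      rw [h5]
      have : ‖a - b‖ * R = R * ‖a - b‖ := mul_comm _ _
      linarith
    linarith
  rw [Real.coe_toNNReal _ hRnn, Real.dist_eq, dist_eq_norm]
  rw [abs_sub_le_iff]
  constructor
  · exact key v v'
  · have := key v' v
    rwa [norm_sub_rev] at this

lemma fderiv_eq_of_subgrad {L : E → ℝ} {v x : E} (hdiff : DifferentiableAt ℝ L v)
    (hsub : ∀ u : E, L v + ⟪x, u - v⟫ ≤ L u) (u : E) :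
    fderiv ℝ L v u = ⟪x, u⟫ := by
  set q : ℝ → ℝ := fun t => L (v + t • u) - L v - t * ⟪x, u⟫ with hq
  have hcurve : ∀ t : ℝ, HasDerivAt (fun s : ℝ => v + s • u) u t := by
    intro t
    have h : HasDerivAt (fun s : ℝ => s • u) ((1:ℝ) • u) t := (hasDerivAt_id t).smul_const u
    simpa using h.const_add v
  have hLd : HasFDerivAt L (fderiv ℝ L v) (v + (0:ℝ) • u) := by
    simpa using hdiff.hasFDerivAt
  have hqd : HasDerivAt q (fderiv ℝ L v u - ⟪x, u⟫) 0 := by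
    have h1 := hLd.comp_hasDerivAt 0 (hcurve 0)
    exact (h1.sub_const (L v)).sub (hasDerivAt_mul_const ⟪x, u⟫)
  have hq0 : q 0 = 0 := by simp [hq]
  have hqnn : ∀ t : ℝ, 0 ≤ q t := by
    intro t
    have h2 := hsub (v + t • u)
    have h3 : (v + t • u) - v = t • u := by abel
    rw [h3, real_inner_smul_right] at h2
    simp only [hq]
    linarith
  have hmin : IsLocalMin q 0 :=
    Filter.Eventually.of_forall (fun t => by rw [hq0]; exact hqnn t)
  have h0 := hmin.hasDerivAt_eq_zero hqd
  linarith [sub_eq_zero.1 h0]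

lemma support_inj {Ω : Set E} (hΩbd : Bornology.IsBounded Ω) {w : E → ℝ}
    (hwc : ContinuousOn w (closure Ω)) {x y v : E} (hx : x ∈ closure Ω) (hy : y ∈ closure Ω)
    (hsx : ∀ z ∈ closure Ω, w x + ⟪v, z - x⟫ ≤ w z)
    (hsy : ∀ z ∈ closure Ω, w y + ⟪v, z - y⟫ ≤ w z)
    (hdiff : DifferentiableAt ℝ (leg Ω w) v) : x = y := by
  have hsubgrad : ∀ (p : E), (∀ z ∈ closure Ω, w p + ⟪v, z - p⟫ ≤ w z) → p ∈ closure Ω →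
      ∀ u : E, fderiv ℝ (leg Ω w) v u = ⟪p, u⟫ := by
    intro p hsp hp u
    apply fderiv_eq_of_subgrad hdiff
    intro u'
    have h1 : leg Ω w v = ⟪v, p⟫ - w p := leg_eq hΩbd hwc hp hsp
    have h2 : ⟪u', p⟫ - w p ≤ leg Ω w u' := le_leg hΩbd hwc hp u'
    have h3 : ⟪p, u' - v⟫ = ⟪p, u'⟫ - ⟪p, v⟫ := inner_sub_right _ _ _
    have h4 : ⟪p, v⟫ = ⟪v, p⟫ := real_inner_comm _ _
    have h5 : ⟪p, u'⟫ = ⟪u', p⟫ := real_inner_comm _ _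
    rw [h1, h3, h4, h5]
    linarith
  have hxy : ∀ u : E, ⟪x, u⟫ = ⟪y, u⟫ := by
    intro u
    rw [← hsubgrad x hsx hx u, hsubgrad y hsy hy u]
  apply ext_inner_right ℝ
  exact hxy



lemma lintegral_det_zero_of_image_null {f : EuclideanSpace ℝ (Fin n) → EuclideanSpace ℝ (Fin n)}
    {A : EuclideanSpace ℝ (Fin n) → EuclideanSpace ℝ (Fin n) →L[ℝ] EuclideanSpace ℝ (Fin n)}
    {S : Set (EuclideanSpace ℝ (Fin n))} (hS : MeasurableSet S)
    (hf : ∀ x ∈ S, HasStrictFDerivAt f (A x) x) (hdet : ∀ x ∈ S, (A x).det ≠ 0)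
    {N : Set (EuclideanSpace ℝ (Fin n))} (hN : volume N = 0) (himg : f '' S ⊆ N) :
    ∫⁻ x in S, ENNReal.ofReal |(A x).det| ∂volume = 0 := by
  classical
  set 𝒮 : Set (Set (EuclideanSpace ℝ (Fin n))) := {u | IsOpen u ∧ InjOn f u} with h𝒮
  have hcover : S ⊆ ⋃₀ 𝒮 := by
    intro x hx
    have hdx : LinearMap.det ((A x) : EuclideanSpace ℝ (Fin n) →ₗ[ℝ] EuclideanSpace ℝ (Fin n)) ≠ 0 :=
      hdet x hx
    set eL := LinearMap.equivOfDetNeZero _ hdx with heL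
    set e := eL.toContinuousLinearEquiv with he
    have hcoe : (e : EuclideanSpace ℝ (Fin n) →L[ℝ] EuclideanSpace ℝ (Fin n)) = A x := by
      ext z
      rfl
    have hstrict : HasStrictFDerivAt f
        ((e : EuclideanSpace ℝ (Fin n) →L[ℝ] EuclideanSpace ℝ (Fin n))) x := by
      rw [hcoe]; exact hf x hx
    set ph := hstrict.toOpenPartialHomeomorph f with hph
    refine ⟨ph.source, ⟨ph.open_source, ?_⟩, hstrict.mem_toOpenPartialHomeomorph_source⟩
    have := ph.injOn
    rwa [show (ph : EuclideanSpace ℝ (Fin n) → EuclideanSpace ℝ (Fin n)) = f from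
      hstrict.toOpenPartialHomeomorph_coe] at this
  obtain ⟨T, hTc, hTsub, hTeq⟩ :=
    TopologicalSpace.isOpen_sUnion_countable 𝒮 (fun u hu => hu.1)
  rcases T.eq_empty_or_nonempty with hTe | hTne
  · have : S = ∅ := by
      rw [← subset_empty_iff]
      intro x hx
      have := hcover hx
      rw [← hTeq, hTe] at this
      simpa using this
    simp [this]
  · obtain ⟨g, hg⟩ := hTc.exists_eq_range hTne
    have hgmem : ∀ k, g k ∈ 𝒮 := fun k => hTsub (by rw [hg]; exact mem_range_self k)
    have hScover : S ⊆ ⋃ k, (S ∩ g k) := by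
      intro x hx
      have h1 := hcover hx
      rw [← hTeq, hg] at h1
      obtain ⟨u, ⟨k, rfl⟩, hxu⟩ := h1
      exact mem_iUnion.2 ⟨k, hx, hxu⟩
    have hle : ∫⁻ x in S, ENNReal.ofReal |(A x).det| ∂volume
        ≤ ∑' k, ∫⁻ x in (S ∩ g k), ENNReal.ofReal |(A x).det| ∂volume :=
      le_trans (lintegral_mono_set hScover) (lintegral_iUnion_le _ _)
    have hzero : ∀ k, ∫⁻ x in (S ∩ g k), ENNReal.ofReal |(A x).det| ∂volume = 0 := by
      intro k
      have hmeas : MeasurableSet (S ∩ g k) := hS.inter (hgmem k).1.measurableSet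
      have heq := lintegral_abs_det_fderiv_eq_addHaar_image volume hmeas
        (fun x hx => (hf x hx.1).hasFDerivAt.hasFDerivWithinAt)
        ((hgmem k).2.mono inter_subset_right)
      rw [heq]
      have : f '' (S ∩ g k) ⊆ N := (image_mono (f := f) inter_subset_left).trans himg
      exact measure_mono_null this hN
    rw [← le_zero_iff]
    calc ∫⁻ x in S, ENNReal.ofReal |(A x).det| ∂volume
        ≤ ∑' k, ∫⁻ x in (S ∩ g k), ENNReal.ofReal |(A x).det| ∂volume := hle
      _ = 0 := by simp [hzero]



theorem stmt_16 (n : ℕ) (hn : 0 < n) (Ω : Set (EuclideanSpace ℝ (Fin n)))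
    (hΩopen : IsOpen Ω) (hΩbd : Bornology.IsBounded Ω)
    (w : EuclideanSpace ℝ (Fin n) → ℝ)
    (hw2 : ContDiffOn ℝ 2 w Ω) (hwc : ContinuousOn w (closure Ω))
    (x₀ : EuclideanSpace ℝ (Fin n)) (hx₀ : x₀ ∈ Ω)
    (ε : ℝ) (hε : 0 < ε) (hεle : ∀ x ∈ frontier Ω, w x₀ + ε ≤ w x)
    (d : ℝ) (hd : IsGreatest ((fun x => ‖x - x₀‖) '' frontier Ω) d) :
    (volume (Metric.ball (0 : EuclideanSpace ℝ (Fin n)) 1)).toReal / d ^ n * ε ^ n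
      ≤ ∫ x in {x | x ∈ Ω ∧ ‖fderiv ℝ w x‖ < ε / d ∧
            ∀ y ∈ Ω, w x + fderiv ℝ w x (y - x) ≤ w y},
          Matrix.det (Matrix.of fun i j : Fin n =>
            fderiv ℝ (fun z => fderiv ℝ w z (EuclideanSpace.single j 1)) x
              (EuclideanSpace.single i 1)) := by
  classical
  obtain ⟨z₀, hz₀fr, hz₀d⟩ := hd.1
  have hz₀ne : z₀ ∉ Ω := by
    rw [frontier, hΩopen.interior_eq] at hz₀fr; exact hz₀fr.2
  have hd0 : 0 < d := by
    rw [← hz₀d]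
    have hne : z₀ ≠ x₀ := fun h => hz₀ne (h ▸ hx₀)
    simpa using sub_ne_zero.2 hne
  have hdub : ∀ z ∈ frontier Ω, ‖z - x₀‖ ≤ d := fun z hz => hd.2 ⟨z, hz, rfl⟩
  have hεd : 0 < ε / d := div_pos hε hd0
  set G : EuclideanSpace ℝ (Fin n) → EuclideanSpace ℝ (Fin n) :=
    fun z => dualIso (EuclideanSpace ℝ (Fin n)) (fderiv ℝ w z) with hGdef
  set A : EuclideanSpace ℝ (Fin n) → EuclideanSpace ℝ (Fin n) →L[ℝ] EuclideanSpace ℝ (Fin n) :=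
    fun x => fderiv ℝ G x with hAdef
  set P : Set (EuclideanSpace ℝ (Fin n)) := {x | x ∈ Ω ∧ ‖fderiv ℝ w x‖ < ε / d ∧
            ∀ y ∈ Ω, w x + fderiv ℝ w x (y - x) ≤ w y} with hPdef
  -- measurability of P
  have hwfc : ContinuousOn (fderiv ℝ w) Ω :=
    hw2.continuousOn_fderiv_of_isOpen hΩopen (by norm_num)
  have hUopen : IsOpen (Ω ∩ (fun x => ‖fderiv ℝ w x‖) ⁻¹' (Set.Iio (ε/d))) :=
    hwfc.norm.isOpen_inter_preimage hΩopen isOpen_Iio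
  have hVopen : IsOpen (⋃ y ∈ Ω,
      (Ω ∩ (fun x => w x + fderiv ℝ w x (y - x) - w y) ⁻¹' (Set.Ioi 0))) := by
    refine isOpen_biUnion fun y hy => ?_
    have hc : ContinuousOn (fun x => w x + fderiv ℝ w x (y - x) - w y) Ω :=
      ((hw2.continuousOn.add
        (hwfc.clm_apply (continuousOn_const.sub continuousOn_id))).sub continuousOn_const)
    exact hc.isOpen_inter_preimage hΩopen isOpen_Ioi
  have hPeq : P = (Ω ∩ (fun x => ‖fderiv ℝ w x‖) ⁻¹' (Set.Iio (ε/d))) \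
      (⋃ y ∈ Ω, (Ω ∩ (fun x => w x + fderiv ℝ w x (y - x) - w y) ⁻¹' (Set.Ioi 0))) := by
    ext x
    simp only [hPdef, mem_setOf_eq, mem_diff, mem_inter_iff, mem_preimage, mem_Iio, mem_Ioi,
      mem_iUnion, exists_prop, not_exists, not_and, not_lt]
    constructor
    · rintro ⟨h1, h2, h3⟩
      exact ⟨⟨h1, h2⟩, fun y hy _ => by linarith [h3 y hy]⟩
    · rintro ⟨⟨h1, h2⟩, h3⟩
      exact ⟨h1, h2, fun y hy => by linarith [h3 y hy h1]⟩
  have hPmeas : MeasurableSet P := by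
    rw [hPeq]; exact hUopen.measurableSet.diff hVopen.measurableSet
  have hPsub : P ⊆ Ω := fun x hx => hx.1
  -- differentiability facts
  have hG1 : ∀ x ∈ Ω, ContDiffAt ℝ 1 G x := by
    intro x hx
    have hΦ : ContDiffAt ℝ 1 (fderiv ℝ w) x :=
      (hw2.contDiffAt (hΩopen.mem_nhds hx)).fderiv_right (by norm_num)
    have hL : ContDiff ℝ 1 (fun φ : StrongDual ℝ (EuclideanSpace ℝ (Fin n)) =>
        dualIso (EuclideanSpace ℝ (Fin n)) φ) :=
      ((dualIso (EuclideanSpace ℝ (Fin n))).toContinuousLinearEquiv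
        : StrongDual ℝ (EuclideanSpace ℝ (Fin n)) ≃L[ℝ] EuclideanSpace ℝ (Fin n)
        ).toContinuousLinearMap.contDiff
    exact (hL.contDiffAt).comp x hΦ
  have hGstrict : ∀ x ∈ Ω, HasStrictFDerivAt G (A x) x :=
    fun x hx => (hG1 x hx).hasStrictFDerivAt one_ne_zero
  have hGderiv : ∀ x ∈ Ω, HasFDerivAt G (A x) x := fun x hx => (hGstrict x hx).hasFDerivAt
  have hGmeas : Measurable G :=
    ((dualIso (EuclideanSpace ℝ (Fin n))).continuous.measurable).comp (measurable_fderiv ℝ w)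
  have hdetmeas : Measurable (fun x => (A x).det) :=
    ContinuousLinearMap.continuous_det.measurable.comp (measurable_fderiv ℝ G)
  -- inner product facts
  have hGinner : ∀ (z y : EuclideanSpace ℝ (Fin n)), ⟪G z, y⟫ = fderiv ℝ w z y :=
    fun z y => inner_dualIso_apply _ _
  have hGnorm : ∀ z, ‖G z‖ = ‖fderiv ℝ w z‖ :=
    fun z => (dualIso (EuclideanSpace ℝ (Fin n))).norm_map _
  have hsuppP : ∀ x ∈ P, ∀ z ∈ closure Ω, w x + ⟪G x, z - x⟫ ≤ w z := by
    intro x hx z hz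
    have h2 := support_closure hwc x (fderiv ℝ w x) hx.2.2 z hz
    rwa [hGinner]
  -- surjectivity onto the small ball
  have hball : Metric.ball (0 : EuclideanSpace ℝ (Fin n)) (ε/d) ⊆ G '' P := by
    intro v hv
    rw [mem_ball_zero_iff] at hv
    obtain ⟨x, hxΩ, hfd, hsupp⟩ := exists_support hΩopen hΩbd hw2 hwc hx₀ hε hεle hd0 hdub hv
    have hGx : G x = v := by
      apply ext_inner_right ℝ
      intro u
      rw [hGinner, hfd]
      rfl
    refine ⟨x, ⟨hxΩ, ?_, ?_⟩, hGx⟩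
    · rw [hfd, innerSL_apply_norm]; exact hv
    · intro y hy
      have h := hsupp y hy
      rw [hfd]
      exact h
  -- the null set of non-differentiability of the Legendre transform
  have hneCl : (closure Ω).Nonempty := ⟨x₀, subset_closure hx₀⟩
  obtain ⟨K, hK⟩ := leg_lipschitz hΩbd hneCl hwc
  set N : Set (EuclideanSpace ℝ (Fin n)) := {v | ¬ DifferentiableAt ℝ (leg Ω w) v} with hNdef
  have hNeq : N = {v | DifferentiableAt ℝ (leg Ω w) v}ᶜ := by
    ext v; simp [hNdef]
  have hNmeas : MeasurableSet N := by
    rw [hNeq]; exact (measurableSet_of_differentiableAt ℝ (leg Ω w)).compl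
  have hNnull : volume N = 0 := by
    have h := hK.ae_differentiableAt (μ := volume)
    rw [ae_iff] at h
    exact h
  set P₁ := P ∩ G ⁻¹' Nᶜ with hP₁def
  set P₂ := P ∩ G ⁻¹' N with hP₂def
  have hP₁meas : MeasurableSet P₁ := hPmeas.inter (hGmeas hNmeas.compl)
  have hP₂meas : MeasurableSet P₂ := hPmeas.inter (hGmeas hNmeas)
  -- injectivity on P₁
  have hinj : InjOn G P₁ := by
    intro x hx y hy hxy
    have hdiff : DifferentiableAt ℝ (leg Ω w) (G x) := by
      have h := hx.2
      simp only [hNdef, mem_preimage, mem_compl_iff, mem_setOf_eq, not_not] at h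
      exact h
    have hsy : ∀ z ∈ closure Ω, w y + ⟪G x, z - y⟫ ≤ w z := by
      intro z hz
      rw [hxy]
      exact hsuppP y hy.1 z hz
    exact support_inj hΩbd hwc (subset_closure hx.1.1) (subset_closure hy.1.1)
      (hsuppP x hx.1) hsy hdiff
  -- area formula on P₁
  have hP1eq : ∫⁻ x in P₁, ENNReal.ofReal |(A x).det| ∂volume = volume (G '' P₁) :=
    lintegral_abs_det_fderiv_eq_addHaar_image volume hP₁meas
      (fun x hx => (hGderiv x hx.1.1).hasFDerivWithinAt) hinj
  have himgball : G '' P₁ ⊆ Metric.ball (0 : EuclideanSpace ℝ (Fin n)) (ε/d) := by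
    rintro _ ⟨x, hx, rfl⟩
    rw [mem_ball_zero_iff, hGnorm]
    exact hx.1.2.1
  have hfin : volume (G '' P₁) < ⊤ := lt_of_le_of_lt (measure_mono himgball) measure_ball_lt_top
  -- the P₂ part contributes nothing
  set S := P₂ ∩ {x | (A x).det ≠ 0} with hSdef
  have hSdetmeas : MeasurableSet {x : EuclideanSpace ℝ (Fin n) | (A x).det ≠ 0} :=
    (hdetmeas (measurableSet_singleton 0)).compl
  have hSmeas : MeasurableSet S := hP₂meas.inter hSdetmeas
  have hS0 : ∫⁻ x in S, ENNReal.ofReal |(A x).det| ∂volume = 0 :=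
    lintegral_det_zero_of_image_null hSmeas
      (fun x hx => hGstrict x hx.1.1.1) (fun x hx => hx.2) hNnull
      (by rintro _ ⟨x, hx, rfl⟩; exact hx.1.2)
  have hrest : ∫⁻ x in P₂ \ S, ENNReal.ofReal |(A x).det| ∂volume = 0 := by
    have hz : ∀ x ∈ P₂ \ S, ENNReal.ofReal |(A x).det| = (0 : ENNReal) := by
      intro x hx
      have hdet0 : (A x).det = 0 := by
        by_contra h
        exact hx.2 ⟨hx.1, h⟩
      simp [hdet0]
    rw [setLIntegral_congr_fun (hP₂meas.diff hSmeas) hz]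
    simp
  have hP2zero : ∫⁻ x in P₂, ENNReal.ofReal |(A x).det| ∂volume = 0 := by
    rw [← le_zero_iff]
    have hsub : P₂ ⊆ S ∪ (P₂ \ S) :=
      fun x hx => (em (x ∈ S)).elim Or.inl (fun h => Or.inr ⟨hx, h⟩)
    calc ∫⁻ x in P₂, ENNReal.ofReal |(A x).det| ∂volume
        ≤ ∫⁻ x in S ∪ (P₂ \ S), ENNReal.ofReal |(A x).det| ∂volume :=
          lintegral_mono_set hsub
      _ ≤ (∫⁻ x in S, ENNReal.ofReal |(A x).det| ∂volume)
          + ∫⁻ x in P₂ \ S, ENNReal.ofReal |(A x).det| ∂volume := lintegral_union_le _ _ _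
      _ = 0 := by rw [hS0, hrest, add_zero]
  -- assembling the lintegral bounds
  have hPsplit : P = P₁ ∪ P₂ := by
    ext x
    constructor
    · intro hx
      by_cases h : G x ∈ N
      · exact Or.inr ⟨hx, h⟩
      · exact Or.inl ⟨hx, h⟩
    · rintro (hx | hx) <;> exact hx.1
  have hPle : ∫⁻ x in P, ENNReal.ofReal |(A x).det| ∂volume ≤ volume (G '' P₁) := by
    calc ∫⁻ x in P, ENNReal.ofReal |(A x).det| ∂volume
        = ∫⁻ x in P₁ ∪ P₂, ENNReal.ofReal |(A x).det| ∂volume := by rw [← hPsplit]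
      _ ≤ (∫⁻ x in P₁, ENNReal.ofReal |(A x).det| ∂volume)
          + ∫⁻ x in P₂, ENNReal.ofReal |(A x).det| ∂volume := lintegral_union_le _ _ _
      _ = volume (G '' P₁) := by rw [hP1eq, hP2zero, add_zero]
  have hPge : volume (G '' P₁) ≤ ∫⁻ x in P, ENNReal.ofReal |(A x).det| ∂volume := by
    rw [← hP1eq]
    exact lintegral_mono_set inter_subset_left
  have hballP1 : volume (Metric.ball (0 : EuclideanSpace ℝ (Fin n)) (ε/d))
      ≤ volume (G '' P₁) := by
    have hsub : Metric.ball (0 : EuclideanSpace ℝ (Fin n)) (ε/d) ⊆ (G '' P₁) ∪ N := by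
      intro v hv
      obtain ⟨x, hx, rfl⟩ := hball hv
      by_cases h : G x ∈ N
      · exact Or.inr h
      · exact Or.inl ⟨x, ⟨hx, h⟩, rfl⟩
    calc volume (Metric.ball (0 : EuclideanSpace ℝ (Fin n)) (ε/d))
        ≤ volume ((G '' P₁) ∪ N) := measure_mono hsub
      _ ≤ volume (G '' P₁) + volume N := measure_union_le _ _
      _ = volume (G '' P₁) := by rw [hNnull, add_zero]
  have hfinP : ∫⁻ x in P, ENNReal.ofReal |(A x).det| ∂volume ≠ ⊤ :=
    (lt_of_le_of_lt hPle hfin).ne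
  have hmain : volume (Metric.ball (0 : EuclideanSpace ℝ (Fin n)) (ε/d))
      ≤ ∫⁻ x in P, ENNReal.ofReal |(A x).det| ∂volume := le_trans hballP1 hPge
  -- integrand identification
  have hdetP : ∀ x ∈ P,
      (Matrix.of fun i j : Fin n =>
        fderiv ℝ (fun z => fderiv ℝ w z (EuclideanSpace.single j 1)) x
          (EuclideanSpace.single i 1)).det = (A x).det
      ∧ 0 ≤ (Matrix.of fun i j : Fin n =>
        fderiv ℝ (fun z => fderiv ℝ w z (EuclideanSpace.single j 1)) x
          (EuclideanSpace.single i 1)).det := by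
    intro x hx
    have h := det_formula hΩopen hw2 hx.1 hx.2.2
    exact h
  have hcong : (∫ x in P, (Matrix.of fun i j : Fin n =>
        fderiv ℝ (fun z => fderiv ℝ w z (EuclideanSpace.single j 1)) x
          (EuclideanSpace.single i 1)).det ∂volume)
      = ∫ x in P, (A x).det ∂volume :=
    setIntegral_congr_fun hPmeas (fun x hx => (hdetP x hx).1)
  have hnonneg : 0 ≤ᵐ[volume.restrict P] fun x => (A x).det :=
    (ae_restrict_iff' hPmeas).2 (ae_of_all _ (fun x hx => by
      have h := hdetP x hx
      show (0:ℝ) ≤ (A x).det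
      rw [← h.1]; exact h.2))
  have hint2 : ∫ x in P, (A x).det ∂volume
      = (∫⁻ x in P, ENNReal.ofReal ((A x).det) ∂volume).toReal :=
    integral_eq_lintegral_of_nonneg_ae hnonneg hdetmeas.aestronglyMeasurable.restrict
  have habs : ∫⁻ x in P, ENNReal.ofReal ((A x).det) ∂volume
      = ∫⁻ x in P, ENNReal.ofReal |(A x).det| ∂volume := by
    apply setLIntegral_congr_fun hPmeas ?_
    intro x hx
    show ENNReal.ofReal (A x).det = ENNReal.ofReal |(A x).det|
    rw [abs_of_nonneg (by rw [← (hdetP x hx).1]; exact (hdetP x hx).2)]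
  -- the left-hand side
  haveI : Nontrivial (EuclideanSpace ℝ (Fin n)) := by
    apply Module.nontrivial_of_finrank_pos (R := ℝ)
    rw [finrank_euclideanSpace_fin]
    exact hn
  have hballvol : volume (Metric.ball (0 : EuclideanSpace ℝ (Fin n)) (ε/d))
      = ENNReal.ofReal ((ε/d)^n) * volume (Metric.ball (0 : EuclideanSpace ℝ (Fin n)) 1) := by
    rw [Measure.addHaar_ball _ _ (le_of_lt hεd), finrank_euclideanSpace_fin]
  have hlhs : (volume (Metric.ball (0 : EuclideanSpace ℝ (Fin n)) 1)).toReal / d ^ n * ε ^ n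
      = (volume (Metric.ball (0 : EuclideanSpace ℝ (Fin n)) (ε/d))).toReal := by
    rw [hballvol, ENNReal.toReal_mul, ENNReal.toReal_ofReal (by positivity), div_pow]
    field_simp
  rw [hlhs, hcong, hint2, habs]
  exact ENNReal.toReal_mono hfinP hmain
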